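/- Let z : Ω → ℝ, T compact, and suppose for x ∈ Ω there is a unique p ∈ T with z(x) = (β² - |x-p|²)/(2β) + w(p) while z(x) > (β² - |x-q|²)/(2β) + w(q) for all q ∈ T with q ≠ p. Let z_ε, p_ε be as in the perturbation construction (w_ε = w + εχ, z_ε its type-A envelope, p_ε a maximizer for z_ε(x)). Then p_ε → p as ε → 0, and consequently the one-sided derivative d/dε|_{ε=0} z_ε(x) exists and equals χ(p). -/

import Mathlib

open Filter Topology

theorem stmt_17 {n : ℕ} (Ω T : Set (EuclideanSpace ℝ (Fin n)))
    (hTc : IsCompact T) (hTne : T.Nonempty)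
    (β : ℝ) (hβ : 0 < β)
    (w χ : EuclideanSpace ℝ (Fin n) → ℝ)
    (hwc : ContinuousOn w T) (hχc : Continuous χ)
    (hχ01 : ∀ q ∈ T, χ q ∈ Set.Icc (0 : ℝ) 1)
    (zf : ℝ → EuclideanSpace ℝ (Fin n) → ℝ)
    (hzf : ∀ ε y, zf ε y =
      sSup ((fun q => (β ^ 2 - ‖y - q‖ ^ 2) / (2 * β) + w q + ε * χ q) '' T))
    (x : EuclideanSpace ℝ (Fin n)) (hx : x ∈ Ω)
    (p : EuclideanSpace ℝ (Fin n)) (hp : p ∈ T)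
    (hmax : zf 0 x = (β ^ 2 - ‖x - p‖ ^ 2) / (2 * β) + w p)
    (huniq : ∀ q ∈ T, q ≠ p → zf 0 x > (β ^ 2 - ‖x - q‖ ^ 2) / (2 * β) + w q)
    (pf : ℝ → EuclideanSpace ℝ (Fin n))
    (hpf : ∀ ε ∈ Set.Ioo (-1 : ℝ) 1, pf ε ∈ T ∧
      zf ε x = (β ^ 2 - ‖x - pf ε‖ ^ 2) / (2 * β) + w (pf ε) + ε * χ (pf ε)) :
    Tendsto pf (𝓝[≠] (0 : ℝ)) (𝓝 p) ∧
      HasDerivAt (fun ε => zf ε x) (χ p) 0 := by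
  set f : EuclideanSpace ℝ (Fin n) → ℝ :=
    fun q => (β ^ 2 - ‖x - q‖ ^ 2) / (2 * β) + w q with hf
  have hfc : ContinuousOn f T := by
    apply ContinuousOn.add _ hwc
    exact ((continuous_const.sub (((continuous_const.sub continuous_id).norm).pow 2)).div_const
      _).continuousOn
  have hgc : ∀ ε : ℝ, ContinuousOn (fun q => f q + ε * χ q) T :=
    fun ε => hfc.add (continuous_const.mul hχc).continuousOn
  have hbdd : ∀ ε : ℝ, BddAbove ((fun q => f q + ε * χ q) '' T) :=
    fun ε => (hTc.image_of_continuousOn (hgc ε)).bddAbove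
  have hle : ∀ (ε : ℝ), ∀ q ∈ T, f q + ε * χ q ≤ zf ε x := by
    intro ε q hq
    rw [hzf ε x]
    exact le_csSup (hbdd ε) (Set.mem_image_of_mem _ hq)
  have hf_le : ∀ q ∈ T, f q ≤ zf 0 x := by
    intro q hq
    have := hle 0 q hq
    simpa using this
  have hlow : ∀ ε : ℝ, zf 0 x + ε * χ p ≤ zf ε x := by
    intro ε
    rw [hmax]
    exact hle ε p hp
  have hup : ∀ ε ∈ Set.Ioo (-1 : ℝ) 1, zf ε x ≤ zf 0 x + ε * χ (pf ε) := by
    intro ε hε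
    obtain ⟨hmem, heq⟩ := hpf ε hε
    rw [heq]
    have h := hf_le (pf ε) hmem
    simp only [hf] at h
    linarith
  have habs : ∀ (ε : ℝ), ∀ q ∈ T, |ε * χ q| ≤ |ε| := by
    intro ε q hq
    rw [abs_mul]
    obtain ⟨h0, h1⟩ := hχ01 q hq
    calc |ε| * |χ q| ≤ |ε| * 1 := by
          apply mul_le_mul_of_nonneg_left _ (abs_nonneg ε)
          rw [abs_of_nonneg h0]; exact h1
      _ = |ε| := mul_one _
  -- key: for every r > 0 there is δ such that small nonzero ε forces pf ε close to p
  have key : ∀ r > (0 : ℝ), ∃ δ > (0 : ℝ), δ ≤ 1 ∧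
      ∀ ε : ℝ, |ε| < δ → dist (pf ε) p < r := by
    intro r hr
    by_cases hKne : (T ∩ (Metric.ball p r)ᶜ).Nonempty
    · have hK : IsCompact (T ∩ (Metric.ball p r)ᶜ) :=
        hTc.inter_right Metric.isOpen_ball.isClosed_compl
      obtain ⟨q0, hq0mem, hq0max⟩ :=
        hK.exists_isMaxOn hKne (hfc.mono Set.inter_subset_left)
      have hq0T : q0 ∈ T := hq0mem.1
      have hq0ne : q0 ≠ p := by
        intro h
        apply hq0mem.2
        rw [h]
        exact Metric.mem_ball_self hr
      have hδpos : 0 < zf 0 x - f q0 := by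
        have := huniq q0 hq0T hq0ne
        simp only [hf]; linarith [this]
      set δ0 : ℝ := zf 0 x - f q0 with hδ0
      refine ⟨min (δ0 / 2) 1, by positivity, min_le_right _ _, ?_⟩
      intro ε hε
      have hε1 : |ε| < 1 := lt_of_lt_of_le hε (min_le_right _ _)
      have hεIoo : ε ∈ Set.Ioo (-1 : ℝ) 1 := abs_lt.mp hε1
      obtain ⟨hmem, heq⟩ := hpf ε hεIoo
      by_contra hcon
      push_neg at hcon
      have hK' : pf ε ∈ T ∩ (Metric.ball p r)ᶜ :=
        ⟨hmem, by simpa [Metric.mem_ball] using hcon⟩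
      have h1 : f (pf ε) ≤ f q0 := hq0max hK'
      have h2 : zf ε x ≤ f q0 + |ε| := by
        rw [heq]
        have := habs ε (pf ε) hmem
        have := abs_le.mp (habs ε (pf ε) hmem)
        simp only [hf] at h1 ⊢
        linarith [this.2]
      have h3 : zf 0 x - |ε| ≤ zf ε x := by
        have := hlow ε
        have h4 := abs_le.mp (habs ε p hp)
        linarith [h4.1]
      have hε2 : |ε| < δ0 / 2 := lt_of_lt_of_le hε (min_le_left _ _)
      linarith
    · refine ⟨1, one_pos, le_refl _, ?_⟩
      intro ε hε
      have hεIoo : ε ∈ Set.Ioo (-1 : ℝ) 1 := abs_lt.mp hε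
      obtain ⟨hmem, _⟩ := hpf ε hεIoo
      by_contra hcon
      push_neg at hcon
      exact hKne ⟨pf ε, hmem, by simpa [Metric.mem_ball] using hcon⟩
  have htend : Tendsto pf (𝓝[≠] (0 : ℝ)) (𝓝 p) := by
    rw [Metric.tendsto_nhds]
    intro r hr
    obtain ⟨δ, hδpos, hδ1, hδ⟩ := key r hr
    have hball : Metric.ball (0 : ℝ) δ ∈ 𝓝 (0 : ℝ) := Metric.ball_mem_nhds _ hδpos
    have : Metric.ball (0 : ℝ) δ ∈ 𝓝[≠] (0 : ℝ) := nhdsWithin_le_nhds hball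
    filter_upwards [this] with ε hε
    have : |ε| < δ := by simpa [Real.dist_eq] using hε
    exact hδ ε this
  refine ⟨htend, ?_⟩
  rw [hasDerivAt_iff_tendsto_slope]
  have h1 : Tendsto (fun ε => χ (pf ε)) (𝓝[≠] (0 : ℝ)) (𝓝 (χ p)) :=
    (hχc.continuousAt.tendsto).comp htend
  have h2 : Tendsto (fun ε => |χ (pf ε) - χ p|) (𝓝[≠] (0 : ℝ)) (𝓝 0) := by
    have := (h1.sub (tendsto_const_nhds (x := χ p))).abs
    simpa using this
  have hev : ∀ᶠ ε in 𝓝[≠] (0 : ℝ),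
      |slope (fun ε => zf ε x) 0 ε - χ p| ≤ |χ (pf ε) - χ p| := by
    have hIoo : Set.Ioo (-1 : ℝ) 1 ∈ 𝓝[≠] (0 : ℝ) :=
      nhdsWithin_le_nhds (Ioo_mem_nhds (by norm_num) (by norm_num))
    filter_upwards [hIoo, self_mem_nhdsWithin] with ε hεIoo hεne
    have hεne' : ε ≠ 0 := hεne
    have hD1 : 0 ≤ zf ε x - zf 0 x - ε * χ p := by linarith [hlow ε]
    have hD2 : zf ε x - zf 0 x - ε * χ p ≤ ε * (χ (pf ε) - χ p) := by
      have := hup ε hεIoo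
      ring_nf
      ring_nf at this
      nlinarith [this]
    have hslope : slope (fun ε => zf ε x) 0 ε - χ p
        = (zf ε x - zf 0 x - ε * χ p) / ε := by
      rw [slope_def_field]
      field_simp
      ring
    rw [hslope, abs_div, abs_of_nonneg hD1, div_le_iff₀ (abs_pos.mpr hεne')]
    calc zf ε x - zf 0 x - ε * χ p ≤ ε * (χ (pf ε) - χ p) := hD2
      _ ≤ |ε * (χ (pf ε) - χ p)| := le_abs_self _
      _ = |ε| * |χ (pf ε) - χ p| := abs_mul _ _
      _ = |χ (pf ε) - χ p| * |ε| := mul_comm _ _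
  have h3 : Tendsto (fun ε => slope (fun ε => zf ε x) 0 ε - χ p) (𝓝[≠] (0 : ℝ)) (𝓝 0) :=
    squeeze_zero_norm' hev h2
  have h4 := h3.add (tendsto_const_nhds (x := χ p))
  simpa using h4
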